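/- In every Eulerian orientation of K_{m,n} (m, n even) there exists an arc that lies on at least mn/8 directed 4-cycles. -/

import Mathlib

open Finset

/-- An orientation of `K_{m,n}`: `o a b = true` means the edge between left vertex `a` and
right vertex `b` is directed from `a` to `b`; it is Eulerian if every vertex has equal
indegree and outdegree. -/
def IsEulerianBip {m n : ℕ} (o : Fin m → Fin n → Bool) : Prop :=
  (∀ a : Fin m, 2 * (univ.filter fun b : Fin n => o a b = true).card = n) ∧
  (∀ b : Fin n, 2 * (univ.filter fun a : Fin m => o a b = true).card = m)

/-- The four arcs spanned by the distinct left vertices `a₁, a₂` and the distinct right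
vertices `b₁, b₂` form the directed 4-cycle `a₁ → b₁ → a₂ → b₂ → a₁` or its reverse. -/
def SpansC4 {m n : ℕ} (o : Fin m → Fin n → Bool) (a₁ a₂ : Fin m) (b₁ b₂ : Fin n) : Prop :=
  (o a₁ b₁ = true ∧ o a₂ b₁ = false ∧ o a₂ b₂ = true ∧ o a₁ b₂ = false) ∨
  (o a₁ b₁ = false ∧ o a₂ b₁ = true ∧ o a₂ b₂ = false ∧ o a₁ b₂ = true)

instance {m n : ℕ} (o : Fin m → Fin n → Bool) (a₁ a₂ : Fin m) (b₁ b₂ : Fin n) :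
    Decidable (SpansC4 o a₁ a₂ b₁ b₂) := by
  unfold SpansC4; infer_instance

/-- The number of directed 4-cycles of `o` (counted as subgraphs, each recorded once via
`a₁ < a₂`, `b₁ < b₂`) that contain the arc lying on the edge between `a` and `b` (directed
according to `o`); a 4-cycle contains this arc precisely when `a` is one of its two left
vertices and `b` is one of its two right vertices. -/
def edgeC4Count {m n : ℕ} (o : Fin m → Fin n → Bool) (a : Fin m) (b : Fin n) : ℕ :=
  ((univ : Finset (Fin m × Fin m × Fin n × Fin n)).filter fun q =>
    q.1 < q.2.1 ∧ q.2.2.1 < q.2.2.2 ∧ SpansC4 o q.1 q.2.1 q.2.2.1 q.2.2.2 ∧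
    (q.1 = a ∨ q.2.1 = a) ∧ (q.2.2.1 = b ∨ q.2.2.2 = b)).card

section Aux

variable {m n : ℕ} (o : Fin m → Fin n → Bool)

lemma spansC4_symm_a {a₁ a₂ : Fin m} {b₁ b₂ : Fin n} (h : SpansC4 o a₁ a₂ b₁ b₂) :
    SpansC4 o a₂ a₁ b₁ b₂ := by
  unfold SpansC4 at *; tauto

lemma spansC4_symm_b {a₁ a₂ : Fin m} {b₁ b₂ : Fin n} (h : SpansC4 o a₁ a₂ b₁ b₂) :
    SpansC4 o a₁ a₂ b₂ b₁ := by
  unfold SpansC4 at *; tauto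

lemma spansC4_ne_a {a₁ a₂ : Fin m} {b₁ b₂ : Fin n} (h : SpansC4 o a₁ a₂ b₁ b₂) :
    a₁ ≠ a₂ := by
  rintro rfl
  rcases h with ⟨h1, h2, -, -⟩ | ⟨h1, h2, -, -⟩ <;> rw [h1] at h2 <;> simp at h2

lemma spansC4_ne_b {a₁ a₂ : Fin m} {b₁ b₂ : Fin n} (h : SpansC4 o a₁ a₂ b₁ b₂) :
    b₁ ≠ b₂ := by
  rintro rfl
  rcases h with ⟨h1, -, -, h4⟩ | ⟨h1, -, -, h4⟩ <;> rw [h1] at h4 <;> simp at h4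

/-- number of right vertices receiving an arc from `a` but not from `a'`. -/
def sCount (a a' : Fin m) : ℕ :=
  ((univ : Finset (Fin n)).filter fun b => o a b = true ∧ o a' b = false).card

lemma minmax_cancel {α : Type*} [LinearOrder α] {a x y : α} (hx : a ≠ x)
    (h1 : min a x = min a y) (h2 : max a x = max a y) : x = y := by
  rcases le_total a x with h | h <;> rcases le_total a y with h' | h'
  · rwa [max_eq_right h, max_eq_right h'] at h2
  · rw [min_eq_left h, min_eq_right h'] at h1
    rw [max_eq_right h, max_eq_left h'] at h2
    exact absurd h2.symm hx
  · rw [min_eq_right h, min_eq_left h'] at h1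
    exact absurd h1.symm hx
  · rwa [min_eq_right h, min_eq_right h'] at h1

lemma sCount_symm (ho : IsEulerianBip o) (a₁ a₂ : Fin m) :
    sCount o a₁ a₂ = sCount o a₂ a₁ := by
  have key : ∀ x y : Fin m,
      sCount o x y + ((univ : Finset (Fin n)).filter fun b => o x b = true ∧ o y b = true).card
        = ((univ : Finset (Fin n)).filter fun b => o x b = true).card := by
    intro x y
    have := Finset.card_filter_add_card_filter_not
      (s := (univ : Finset (Fin n)).filter fun b => o x b = true)
      (p := fun b => o y b = true)
    rw [Finset.filter_filter, Finset.filter_filter] at this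
    rw [← this]
    have e1 : ((univ : Finset (Fin n)).filter fun b => o x b = true ∧ o y b = false)
        = (univ : Finset (Fin n)).filter fun b => o x b = true ∧ ¬ o y b = true := by
      apply Finset.filter_congr; intro b _; simp [Bool.not_eq_true]
    rw [sCount, e1]
    omega
  have h1 := key a₁ a₂
  have h2 := key a₂ a₁
  have e : ((univ : Finset (Fin n)).filter fun b => o a₁ b = true ∧ o a₂ b = true)
      = (univ : Finset (Fin n)).filter fun b => o a₂ b = true ∧ o a₁ b = true := by
    apply Finset.filter_congr; intro b _; simp [and_comm]
  rw [e] at h1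
  have d1 := ho.1 a₁
  have d2 := ho.1 a₂
  omega

lemma pairSum (a₁ a₂ : Fin m) :
    (∑ b : Fin n, ∑ b' : Fin n, if SpansC4 o a₁ a₂ b b' then 1 else 0)
      = 2 * (sCount o a₁ a₂ * sCount o a₂ a₁) := by
  have hcard : (∑ b : Fin n, ∑ b' : Fin n, if SpansC4 o a₁ a₂ b b' then 1 else 0)
      = ((univ : Finset (Fin n × Fin n)).filter fun p => SpansC4 o a₁ a₂ p.1 p.2).card := by
    rw [Finset.card_filter]
    exact (Fintype.sum_prod_type (fun p : Fin n × Fin n => if SpansC4 o a₁ a₂ p.1 p.2 then (1 : ℕ) else 0)).symm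
  rw [hcard]
  have hset : ((univ : Finset (Fin n × Fin n)).filter fun p => SpansC4 o a₁ a₂ p.1 p.2)
      = ((univ : Finset (Fin n)).filter fun b => o a₁ b = true ∧ o a₂ b = false) ×ˢ
          ((univ : Finset (Fin n)).filter fun b => o a₂ b = true ∧ o a₁ b = false) ∪
        ((univ : Finset (Fin n)).filter fun b => o a₂ b = true ∧ o a₁ b = false) ×ˢ
          ((univ : Finset (Fin n)).filter fun b => o a₁ b = true ∧ o a₂ b = false) := by
    ext p
    simp only [Finset.mem_filter, Finset.mem_univ, true_and, Finset.mem_union,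
      Finset.mem_product]
    unfold SpansC4
    tauto
  rw [hset, Finset.card_union_of_disjoint, Finset.card_product, Finset.card_product,
    sCount, sCount]
  · ring
  · rw [Finset.disjoint_left]
    rintro p hp hq
    rw [Finset.mem_product] at hp hq
    have h1 := hp.1
    have h2 := hq.1
    simp only [Finset.mem_filter] at h1 h2
    rw [h1.2.1] at h2
    simp at h2

lemma sum_sCount (ho : IsEulerianBip o) :
    4 * ∑ a : Fin m, ∑ a' : Fin m, sCount o a a' = n * m ^ 2 := by
  have hs : ∀ a a' : Fin m, sCount o a a'
      = ∑ b : Fin n, (if o a b = true then 1 else 0) * (if o a' b = false then 1 else 0) := by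
    intro a a'
    rw [sCount, Finset.card_filter]
    apply Finset.sum_congr rfl
    intro b _
    by_cases h1 : o a b = true <;> by_cases h2 : o a' b = false <;> simp [h1, h2]
  have hre : ∑ a : Fin m, ∑ a' : Fin m, sCount o a a'
      = ∑ b : Fin n,
          (∑ a : Fin m, if o a b = true then 1 else 0) *
          (∑ a' : Fin m, if o a' b = false then 1 else 0) := by
    simp only [hs]
    calc ∑ a : Fin m, ∑ a' : Fin m, ∑ b : Fin n,
          (if o a b = true then 1 else 0) * (if o a' b = false then 1 else 0)
        = ∑ a : Fin m, ∑ b : Fin n, ∑ a' : Fin m,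
          (if o a b = true then 1 else 0) * (if o a' b = false then 1 else 0) := by
          apply Finset.sum_congr rfl
          intro a _
          exact Finset.sum_comm
      _ = ∑ b : Fin n, ∑ a : Fin m, ∑ a' : Fin m,
          (if o a b = true then 1 else 0) * (if o a' b = false then 1 else 0) :=
          Finset.sum_comm
      _ = ∑ b : Fin n, (∑ a : Fin m, if o a b = true then 1 else 0) *
          (∑ a' : Fin m, if o a' b = false then 1 else 0) := by
          apply Finset.sum_congr rfl
          intro b _
          rw [Finset.sum_mul_sum]
  rw [hre, Finset.mul_sum]
  have hconst : ∀ b : Fin n,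
      4 * ((∑ a : Fin m, if o a b = true then 1 else 0) *
        (∑ a' : Fin m, if o a' b = false then 1 else 0)) = m ^ 2 := by
    intro b
    have hd : (∑ a : Fin m, if o a b = true then 1 else 0)
        = ((univ : Finset (Fin m)).filter fun a => o a b = true).card := by
      rw [Finset.card_filter]
    have he : (∑ a' : Fin m, if o a' b = false then 1 else 0)
        = ((univ : Finset (Fin m)).filter fun a => ¬ o a b = true).card := by
      rw [Finset.card_filter]
      apply Finset.sum_congr rfl
      intro a _
      simp [Bool.not_eq_true]
    have hsum := Finset.card_filter_add_card_filter_not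
      (s := (univ : Finset (Fin m))) (p := fun a => o a b = true)
    have hdm := ho.2 b
    rw [hd, he]
    rw [Finset.card_univ, Fintype.card_fin] at hsum
    nlinarith [hsum, hdm]
  calc ∑ b : Fin n, 4 * ((∑ a : Fin m, if o a b = true then 1 else 0) *
        (∑ a' : Fin m, if o a' b = false then 1 else 0))
      = ∑ _b : Fin n, m ^ 2 := by
        apply Finset.sum_congr rfl; intro b _; exact hconst b
    _ = n * m ^ 2 := by rw [Finset.sum_const, Finset.card_univ, Fintype.card_fin, smul_eq_mul]

/-- The number of ordered copies of C4 through the left vertex `a` and right vertex `b`. -/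
def tCount (a : Fin m) (b : Fin n) : ℕ :=
  ((univ : Finset (Fin m × Fin n)).filter fun p => SpansC4 o a p.1 b p.2).card

lemma tCount_le_edgeC4Count (a : Fin m) (b : Fin n) :
    tCount o a b ≤ edgeC4Count o a b := by
  apply Finset.card_le_card_of_injOn
    (fun p => (min a p.1, max a p.1, min b p.2, max b p.2))
  · intro p hp
    simp only [Finset.mem_coe, Finset.mem_filter, Finset.mem_univ, true_and] at hp ⊢
    have ha := spansC4_ne_a o hp
    have hb := spansC4_ne_b o hp
    have h1 : SpansC4 o (min a p.1) (max a p.1) b p.2 := by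
      rcases le_total a p.1 with h | h
      · rw [min_eq_left h, max_eq_right h]; exact hp
      · rw [min_eq_right h, max_eq_left h]; exact spansC4_symm_a o hp
    have h2 : SpansC4 o (min a p.1) (max a p.1) (min b p.2) (max b p.2) := by
      rcases le_total b p.2 with h | h
      · rw [min_eq_left h, max_eq_right h]; exact h1
      · rw [min_eq_right h, max_eq_left h]; exact spansC4_symm_b o h1
    refine ⟨min_lt_max.mpr ha, min_lt_max.mpr hb, h2, ?_, ?_⟩
    · rcases le_total a p.1 with h | h
      · exact Or.inl (min_eq_left h)
      · exact Or.inr (max_eq_left h)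
    · rcases le_total b p.2 with h | h
      · exact Or.inl (min_eq_left h)
      · exact Or.inr (max_eq_left h)
  · intro p hp q hq heq
    simp only [Finset.mem_coe, Finset.mem_filter, Finset.mem_univ, true_and] at hp hq
    have hap := spansC4_ne_a o hp
    have haq := spansC4_ne_a o hq
    have hbp := spansC4_ne_b o hp
    have hbq := spansC4_ne_b o hq
    simp only [Prod.mk.injEq] at heq
    obtain ⟨e1, e2, e3, e4⟩ := heq
    have h1 : p.1 = q.1 := minmax_cancel hap e1 e2
    have h2 : p.2 = q.2 := minmax_cancel hbp e3 e4
    exact Prod.ext h1 h2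

lemma sum_tCount (ho : IsEulerianBip o) :
    ∑ a : Fin m, ∑ b : Fin n, tCount o a b
      = 2 * ∑ a : Fin m, ∑ a' : Fin m, sCount o a a' ^ 2 := by
  have step1 : ∀ a : Fin m, ∀ b : Fin n, tCount o a b
      = ∑ a' : Fin m, ∑ b' : Fin n, if SpansC4 o a a' b b' then 1 else 0 := by
    intro a b
    rw [tCount, Finset.card_filter]
    exact Fintype.sum_prod_type _
  calc ∑ a : Fin m, ∑ b : Fin n, tCount o a b
      = ∑ a : Fin m, ∑ a' : Fin m, ∑ b : Fin n, ∑ b' : Fin n,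
          if SpansC4 o a a' b b' then 1 else 0 := by
        apply Finset.sum_congr rfl
        intro a _
        simp only [step1]
        exact Finset.sum_comm
    _ = ∑ a : Fin m, ∑ a' : Fin m, 2 * (sCount o a a' * sCount o a' a) := by
        apply Finset.sum_congr rfl; intro a _
        apply Finset.sum_congr rfl; intro a' _
        exact pairSum o a a'
    _ = 2 * ∑ a : Fin m, ∑ a' : Fin m, sCount o a a' ^ 2 := by
        rw [Finset.mul_sum]
        apply Finset.sum_congr rfl; intro a _
        rw [Finset.mul_sum]
        apply Finset.sum_congr rfl; intro a' _
        rw [sCount_symm o ho a' a, sq]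

end Aux

/-- In every Eulerian orientation of `K_{m,n}` (`m`, `n` even) there exists an arc lying
on at least `mn/8` directed 4-cycles. -/
theorem exists_arc_on_many_C4 (m n : ℕ) (hm : Even m) (hn : Even n)
    (hm0 : 0 < m) (hn0 : 0 < n)
    (o : Fin m → Fin n → Bool) (ho : IsEulerianBip o) :
    ∃ (a : Fin m) (b : Fin n), (m : ℝ) * n / 8 ≤ (edgeC4Count o a b : ℝ) := by
  by_contra hcon
  push_neg at hcon
  -- the ℕ quantities
  set S1 : ℕ := ∑ a : Fin m, ∑ a' : Fin m, sCount o a a' with hS1def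
  set S2 : ℕ := ∑ a : Fin m, ∑ a' : Fin m, sCount o a a' ^ 2 with hS2def
  have hS1 : 4 * S1 = n * m ^ 2 := sum_sCount o ho
  -- Cauchy-Schwarz
  have hCS : S1 ^ 2 ≤ m ^ 2 * S2 := by
    have := sq_sum_le_card_mul_sum_sq
      (s := (univ : Finset (Fin m × Fin m))) (f := fun p => sCount o p.1 p.2)
    rw [Finset.card_univ, Fintype.card_prod, Fintype.card_fin] at this
    calc S1 ^ 2 = (∑ p : Fin m × Fin m, sCount o p.1 p.2) ^ 2 := by
          rw [hS1def, Fintype.sum_prod_type]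
      _ ≤ (m * m) * ∑ p : Fin m × Fin m, sCount o p.1 p.2 ^ 2 := this
      _ = m ^ 2 * S2 := by rw [hS2def, Fintype.sum_prod_type, sq]
  have hT : ∑ a : Fin m, ∑ b : Fin n, tCount o a b = 2 * S2 := sum_tCount o ho
  -- strict upper bound on the sum of tCounts from the contradiction hypothesis
  have hTb : ∀ a : Fin m, ∀ b : Fin n, (tCount o a b : ℝ) < (m : ℝ) * n / 8 := by
    intro a b
    have h1 : (tCount o a b : ℝ) ≤ (edgeC4Count o a b : ℝ) := by
      exact_mod_cast tCount_le_edgeC4Count o a b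
    exact lt_of_le_of_lt h1 (hcon a b)
  have hne : ((univ : Finset (Fin m × Fin n))).Nonempty := by
    refine ⟨(⟨0, hm0⟩, ⟨0, hn0⟩), Finset.mem_univ _⟩
  have hstrict : ((2 * S2 : ℕ) : ℝ) < (m : ℝ) * n * ((m : ℝ) * n / 8) := by
    rw [← hT]
    push_cast
    calc ∑ a : Fin m, ∑ b : Fin n, (tCount o a b : ℝ)
        = ∑ p : Fin m × Fin n, (tCount o p.1 p.2 : ℝ) := by
          rw [Fintype.sum_prod_type]
      _ < ∑ _p : Fin m × Fin n, (m : ℝ) * n / 8 := by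
          apply Finset.sum_lt_sum_of_nonempty hne
          intro p _
          exact hTb p.1 p.2
      _ = (m : ℝ) * n * ((m : ℝ) * n / 8) := by
          rw [Finset.sum_const, Finset.card_univ, Fintype.card_prod, Fintype.card_fin,
            Fintype.card_fin, nsmul_eq_mul]
          push_cast
          ring
  -- derive the contradiction
  have hM : (0 : ℝ) < m := by exact_mod_cast hm0
  have hN : (0 : ℝ) < n := by exact_mod_cast hn0
  have hCS' : ((S1 : ℝ)) ^ 2 ≤ (m : ℝ) ^ 2 * S2 := by exact_mod_cast hCS
  have hS1' : 4 * (S1 : ℝ) = (n : ℝ) * (m : ℝ) ^ 2 := by exact_mod_cast hS1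
  have hstrict' : 2 * (S2 : ℝ) < (m : ℝ) * n * ((m : ℝ) * n / 8) := by
    push_cast at hstrict
    linarith
  have hMM : (0 : ℝ) < (m : ℝ) ^ 2 := by positivity
  have e1 : ((n : ℝ) * (m : ℝ) ^ 2) ^ 2 = (4 * (S1 : ℝ)) ^ 2 := by rw [hS1']
  have e2 : (n : ℝ) ^ 2 * (m : ℝ) ^ 4 = 16 * (S1 : ℝ) ^ 2 := by linear_combination e1
  have e3 : 16 * (S1 : ℝ) ^ 2 ≤ 16 * ((m : ℝ) ^ 2 * S2) := by linarith
  have e4 : 16 * (S2 : ℝ) < (m : ℝ) ^ 2 * (n : ℝ) ^ 2 := by nlinarith [hstrict']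
  have e5 := mul_lt_mul_of_pos_left e4 hMM
  linarith [e2, e3, e5]
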